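/- Let g be the Lorentzian metric Lie algebra on pseudo-orthonormal basis u1,u2,u3,u4 (⟨u1,u1⟩=⟨u2,u2⟩=⟨u3,u4⟩=1) with brackets [u1,u4]=γ1 u1 − γ2 u2 + γ3 u3, [u2,u4]=γ2 u1 + γ4 u2 + γ5 u3, [u3,u4]=γ8 u3. Then u3 is a recurrent null vector: ∇_{u1} u3 = ∇_{u2} u3 = ∇_{u3} u3 = 0 and ∇_{u4} u3 = −γ8 u3. -/
import Mathlib


noncomputable section

open Finset Polynomial

abbrev V : Type := Fin 4 → ℝ

def e (i : Fin 4) : V := Pi.single i 1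

/-- bilinear bracket determined by structure constants `c`. -/
def br (c : Fin 4 → Fin 4 → V) (x y : V) : V :=
  ∑ i : Fin 4, ∑ j : Fin 4, (x i * y j) • c i j

/-- bilinear form determined by the matrix `G`. -/
def gmet (G : Matrix (Fin 4) (Fin 4) ℝ) (x y : V) : ℝ :=
  ∑ i : Fin 4, ∑ j : Fin 4, x i * y j * G i j

/-- `D` satisfies the Koszul formula of the Levi-Civita connection. -/
def Koszul (G : Matrix (Fin 4) (Fin 4) ℝ) (c : Fin 4 → Fin 4 → V) (D : V → V → V) : Prop :=
  ∀ x y z : V, 2 * gmet G (D x y) z =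
    gmet G (br c x y) z - gmet G (br c y z) x + gmet G (br c z x) y

/-- curvature tensor `R(x,y)z`. -/
def Rcurv (c : Fin 4 → Fin 4 → V) (D : V → V → V) (x y z : V) : V :=
  D x (D y z) - D y (D x z) - D (br c x y) z

/-- Ricci tensor `ρ(x,y) = tr (z ↦ R(z,x)y)`. -/
def ricciT (c : Fin 4 → Fin 4 → V) (D : V → V → V) (x y : V) : ℝ :=
  ∑ i : Fin 4, Rcurv c D (e i) x y i

/-- scalar curvature: metric trace of the Ricci tensor (here `G` is its own inverse). -/
def scalCurv (G : Matrix (Fin 4) (Fin 4) ℝ) (c : Fin 4 → Fin 4 → V) (D : V → V → V) : ℝ :=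
  ∑ i : Fin 4, ∑ j : Fin 4, G i j * ricciT c D (e i) (e j)

/-- metric with ⟨u1,u2⟩=⟨u3,u3⟩=⟨u4,u4⟩=1. -/
def Gpp : Matrix (Fin 4) (Fin 4) ℝ := !![0,1,0,0; 1,0,0,0; 0,0,1,0; 0,0,0,1]

/-- metric with ⟨u1,u1⟩=⟨u2,u2⟩=⟨u3,u4⟩=1. -/
def Gdeg : Matrix (Fin 4) (Fin 4) ℝ := !![1,0,0,0; 0,1,0,0; 0,0,0,1; 0,0,1,0]

/-- orthonormal metric with e4 timelike. -/
def Gort : Matrix (Fin 4) (Fin 4) ℝ := !![1,0,0,0; 0,1,0,0; 0,0,1,0; 0,0,0,-1]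

def c9 (g1 g2 g3 g4 g5 g8 : ℝ) : Fin 4 → Fin 4 → V :=
  let b14 : V := ![g1, -g2, g3, 0]
  let b24 : V := ![g2, g4, g5, 0]
  let b34 : V := ![0, 0, g8, 0]
  ![![0, 0, 0, b14],
    ![0, 0, 0, b24],
    ![0, 0, 0, b34],
    ![-b14, -b24, -b34, 0]]


lemma ext_gm (v w : V) (h : ∀ j : Fin 4, gmet Gdeg v (e j) = gmet Gdeg w (e j)) :
    v = w := by
  funext i
  fin_cases i
  · have := h 0; simpa [gmet, Gdeg, e, Fin.sum_univ_four, Pi.single_apply, Matrix.vecHead, Matrix.vecTail] using this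
  · have := h 1; simpa [gmet, Gdeg, e, Fin.sum_univ_four, Pi.single_apply, Matrix.vecHead, Matrix.vecTail] using this
  · have := h 3; simpa [gmet, Gdeg, e, Fin.sum_univ_four, Pi.single_apply, Matrix.vecHead, Matrix.vecTail] using this
  · have := h 2; simpa [gmet, Gdeg, e, Fin.sum_univ_four, Pi.single_apply, Matrix.vecHead, Matrix.vecTail] using this

/-- u3 is a recurrent null vector. -/
theorem stmt9 (g1 g2 g3 g4 g5 g8 : ℝ) (D : V → V → V)
    (hD : Koszul Gdeg (c9 g1 g2 g3 g4 g5 g8) D) :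
    gmet Gdeg (e 2) (e 2) = 0 ∧
    D (e 0) (e 2) = 0 ∧ D (e 1) (e 2) = 0 ∧ D (e 2) (e 2) = 0 ∧
    D (e 3) (e 2) = -g8 • e 2 := by
  refine ⟨by simp [gmet, Gdeg, e, Fin.sum_univ_four, Pi.single_apply], ?_, ?_, ?_, ?_⟩
  · apply ext_gm
    intro j
    have h := hD (e 0) (e 2) (e j)
    fin_cases j <;>
      simp [br, c9, gmet, Gdeg, e, Fin.sum_univ_four, Pi.single_apply,
        Matrix.cons_val_zero, Matrix.cons_val_one, Matrix.vecHead, Matrix.vecTail] at h ⊢ <;> linarith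
  · apply ext_gm
    intro j
    have h := hD (e 1) (e 2) (e j)
    fin_cases j <;>
      simp [br, c9, gmet, Gdeg, e, Fin.sum_univ_four, Pi.single_apply,
        Matrix.cons_val_zero, Matrix.cons_val_one, Matrix.vecHead, Matrix.vecTail] at h ⊢ <;> linarith
  · apply ext_gm
    intro j
    have h := hD (e 2) (e 2) (e j)
    fin_cases j <;>
      simp [br, c9, gmet, Gdeg, e, Fin.sum_univ_four, Pi.single_apply,
        Matrix.cons_val_zero, Matrix.cons_val_one, Matrix.vecHead, Matrix.vecTail] at h ⊢ <;> linarith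
  · apply ext_gm
    intro j
    have h := hD (e 3) (e 2) (e j)
    fin_cases j <;>
      simp [br, c9, gmet, Gdeg, e, Fin.sum_univ_four, Pi.single_apply,
        Matrix.cons_val_zero, Matrix.cons_val_one, Matrix.vecHead, Matrix.vecTail] at h ⊢ <;> linarith
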